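/- Let 𝓡 be a width-2 rank-2 matrix that is monomial of crossing type, i.e. 𝓡 (k,l) (i,j) ≠ 0 implies (k,l) = (j,i), and let R'' be any charge-conserving width-2 rank-2 matrix. Then 𝓡₁ * 𝓡₂ * R''₁ = R''₂ * 𝓡₁ * 𝓡₂ as matrices in Matrix (Fin 2 × Fin 2 × Fin 2) (Fin 2 × Fin 2 × Fin 2) ℂ. -/
import Mathlib


open Matrix

noncomputable section

/-- The width-3 matrix `M₁ = M ⊗ 1`. -/
def Lone {N : ℕ} (M : Matrix (Fin N × Fin N) (Fin N × Fin N) ℂ) :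
    Matrix (Fin N × Fin N × Fin N) (Fin N × Fin N × Fin N) ℂ :=
  Matrix.of fun p q =>
    M (p.1, p.2.1) (q.1, q.2.1) * (if p.2.2 = q.2.2 then (1 : ℂ) else 0)

/-- The width-3 matrix `M₂ = 1 ⊗ M`. -/
def Ltwo {N : ℕ} (M : Matrix (Fin N × Fin N) (Fin N × Fin N) ℂ) :
    Matrix (Fin N × Fin N × Fin N) (Fin N × Fin N × Fin N) ℂ :=
  Matrix.of fun p q =>
    (if p.1 = q.1 then (1 : ℂ) else 0) * M (p.2.1, p.2.2) (q.2.1, q.2.2)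

/-- The pair (S,R) satisfies the loop braid relations. -/
def LoopBraid {N : ℕ} (S R : Matrix (Fin N × Fin N) (Fin N × Fin N) ℂ) : Prop :=
  S * S = 1 ∧
  Lone S * Ltwo S * Lone S = Ltwo S * Lone S * Ltwo S ∧
  Lone R * Ltwo R * Lone R = Ltwo R * Lone R * Ltwo R ∧
  Lone R * Ltwo R * Lone S = Ltwo S * Lone R * Ltwo R ∧
  Lone R * Ltwo S * Lone S = Ltwo S * Lone S * Ltwo R

/-- A width-2 rank-N matrix is charge-conserving. -/
def ChargeConserving {N : ℕ} (M : Matrix (Fin N × Fin N) (Fin N × Fin N) ℂ) : Prop :=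
  ∀ k l i j : Fin N, M (k, l) (i, j) ≠ 0 → ((k, l) = (i, j) ∨ (k, l) = (j, i))

/-- A width-2 matrix is monomial of crossing type. -/
def CrossingType {N : ℕ} (M : Matrix (Fin N × Fin N) (Fin N × Fin N) ℂ) : Prop :=
  ∀ k l i j : Fin N, M (k, l) (i, j) ≠ 0 → (k, l) = (j, i)

set_option maxHeartbeats 2000000 in
theorem stmt6 (𝓡 R'' : Matrix (Fin 2 × Fin 2) (Fin 2 × Fin 2) ℂ)
    (h𝓡 : CrossingType 𝓡) (hR'' : ChargeConserving R'') :
    Lone 𝓡 * Ltwo 𝓡 * Lone R'' = Ltwo R'' * Lone 𝓡 * Ltwo 𝓡 := by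
  have hz : ∀ k l i j : Fin 2, (k, l) ≠ (j, i) → 𝓡 (k, l) (i, j) = 0 := by
    intro k l i j h
    by_contra hne
    exact h (h𝓡 k l i j hne)
  have hz' : ∀ k l i j : Fin 2, (k, l) ≠ (i, j) → (k, l) ≠ (j, i) → R'' (k, l) (i, j) = 0 := by
    intro k l i j h1 h2
    by_contra hne
    rcases hR'' k l i j hne with h | h
    · exact h1 h
    · exact h2 h
  have zr0 : 𝓡 ((0:Fin 2), (0:Fin 2)) ((0:Fin 2), (1:Fin 2)) = 0 := hz 0 0 0 1 (by decide)
  have zr1 : 𝓡 ((0:Fin 2), (0:Fin 2)) ((1:Fin 2), (0:Fin 2)) = 0 := hz 0 0 1 0 (by decide)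
  have zr2 : 𝓡 ((0:Fin 2), (0:Fin 2)) ((1:Fin 2), (1:Fin 2)) = 0 := hz 0 0 1 1 (by decide)
  have zr3 : 𝓡 ((0:Fin 2), (1:Fin 2)) ((0:Fin 2), (0:Fin 2)) = 0 := hz 0 1 0 0 (by decide)
  have zr4 : 𝓡 ((0:Fin 2), (1:Fin 2)) ((0:Fin 2), (1:Fin 2)) = 0 := hz 0 1 0 1 (by decide)
  have zr5 : 𝓡 ((0:Fin 2), (1:Fin 2)) ((1:Fin 2), (1:Fin 2)) = 0 := hz 0 1 1 1 (by decide)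
  have zr6 : 𝓡 ((1:Fin 2), (0:Fin 2)) ((0:Fin 2), (0:Fin 2)) = 0 := hz 1 0 0 0 (by decide)
  have zr7 : 𝓡 ((1:Fin 2), (0:Fin 2)) ((1:Fin 2), (0:Fin 2)) = 0 := hz 1 0 1 0 (by decide)
  have zr8 : 𝓡 ((1:Fin 2), (0:Fin 2)) ((1:Fin 2), (1:Fin 2)) = 0 := hz 1 0 1 1 (by decide)
  have zr9 : 𝓡 ((1:Fin 2), (1:Fin 2)) ((0:Fin 2), (0:Fin 2)) = 0 := hz 1 1 0 0 (by decide)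
  have zr10 : 𝓡 ((1:Fin 2), (1:Fin 2)) ((0:Fin 2), (1:Fin 2)) = 0 := hz 1 1 0 1 (by decide)
  have zr11 : 𝓡 ((1:Fin 2), (1:Fin 2)) ((1:Fin 2), (0:Fin 2)) = 0 := hz 1 1 1 0 (by decide)
  have zs0 : R'' ((0:Fin 2), (0:Fin 2)) ((0:Fin 2), (1:Fin 2)) = 0 := hz' 0 0 0 1 (by decide) (by decide)
  have zs1 : R'' ((0:Fin 2), (0:Fin 2)) ((1:Fin 2), (0:Fin 2)) = 0 := hz' 0 0 1 0 (by decide) (by decide)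
  have zs2 : R'' ((0:Fin 2), (0:Fin 2)) ((1:Fin 2), (1:Fin 2)) = 0 := hz' 0 0 1 1 (by decide) (by decide)
  have zs3 : R'' ((0:Fin 2), (1:Fin 2)) ((0:Fin 2), (0:Fin 2)) = 0 := hz' 0 1 0 0 (by decide) (by decide)
  have zs4 : R'' ((0:Fin 2), (1:Fin 2)) ((1:Fin 2), (1:Fin 2)) = 0 := hz' 0 1 1 1 (by decide) (by decide)
  have zs5 : R'' ((1:Fin 2), (0:Fin 2)) ((0:Fin 2), (0:Fin 2)) = 0 := hz' 1 0 0 0 (by decide) (by decide)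
  have zs6 : R'' ((1:Fin 2), (0:Fin 2)) ((1:Fin 2), (1:Fin 2)) = 0 := hz' 1 0 1 1 (by decide) (by decide)
  have zs7 : R'' ((1:Fin 2), (1:Fin 2)) ((0:Fin 2), (0:Fin 2)) = 0 := hz' 1 1 0 0 (by decide) (by decide)
  have zs8 : R'' ((1:Fin 2), (1:Fin 2)) ((0:Fin 2), (1:Fin 2)) = 0 := hz' 1 1 0 1 (by decide) (by decide)
  have zs9 : R'' ((1:Fin 2), (1:Fin 2)) ((1:Fin 2), (0:Fin 2)) = 0 := hz' 1 1 1 0 (by decide) (by decide)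

  ext ⟨a, b, c⟩ ⟨a', b', c'⟩
  fin_cases a <;> fin_cases b <;> fin_cases c <;> fin_cases a' <;> fin_cases b' <;>
      fin_cases c' <;>
    simp [Fin.mk_zero, Fin.mk_one, Matrix.mul_apply, Lone, Ltwo, Fintype.sum_prod_type, Fin.sum_univ_two,
      -Prod.mk_zero_zero, -Prod.mk_one_one, zr0, zr1, zr2, zr3, zr4, zr5, zr6, zr7, zr8, zr9, zr10, zr11, zs0, zs1, zs2, zs3, zs4, zs5, zs6, zs7, zs8, zs9] <;>
    ring
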